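/- arXiv:1408.5923 — 4 statements merged into one kernel-verified Lean document; each statement's English description precedes it below -/
import Mathlib

section
/- Over a field K with 1+1 ≠ 0, a regular quadratic form on a finite-dimensional vector space that represents zero nontrivially represents every element of K. -/
/-- Over a field `K` with `1 + 1 ≠ 0`, a regular quadratic form on a finite-dimensional
vector space that represents zero nontrivially represents every element of `K`. -/
theorem regular_quadraticForm_represents_all_of_represents_zero
    {K V : Type*} [Field K] [AddCommGroup V] [Module K V] [FiniteDimensional K V]
    (h2 : (2 : K) ≠ 0) (q : QuadraticForm K V)
    (hreg : ∀ y : V, y ≠ 0 → ∃ x : V, QuadraticMap.polar (⇑q) x y ≠ 0)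
    (a : V) (ha : a ≠ 0) (ha0 : q a = 0) :
    ∀ α : K, ∃ x : V, x ≠ 0 ∧ q x = α := by
  intro α
  obtain ⟨b, hb⟩ := hreg a ha
  refine ⟨b + ((α - q b) / QuadraticMap.polar (⇑q) b a) • a, ?_, ?_⟩
  · intro hx
    have hb0 : b = -(((α - q b) / QuadraticMap.polar (⇑q) b a) • a) := by
      rw [eq_neg_iff_add_eq_zero]; exact hx
    apply hb
    nth_rewrite 1 [hb0]
    rw [QuadraticMap.polar_neg_left, QuadraticMap.polar_smul_left, QuadraticMap.polar_self]
    simp [ha0]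
  · have key : q (b + ((α - q b) / QuadraticMap.polar (⇑q) b a) • a)
        = q b + q (((α - q b) / QuadraticMap.polar (⇑q) b a) • a)
          + QuadraticMap.polar (⇑q) b (((α - q b) / QuadraticMap.polar (⇑q) b a) • a) := by
      simp [QuadraticMap.polar]
    rw [key, QuadraticMap.map_smul, QuadraticMap.polar_smul_right, ha0]
    field_simp
    rw [smul_zero, smul_eq_mul, div_mul_cancel₀ _ hb]; ring
end

section
/- Let N be a finitely generated free module over a principal ideal domain O (with 1+1 ≠ 0) equipped with a quadratic form, and let M⊥ denote its radical. Then N splits as an orthogonal direct sum N = M⊥ ⊥ L for some submodule L, and if 0 < rank(M⊥) < rank(N) there is a basis e₁,...,eₙ of N with e₁,...,e_k a basis of M⊥ and e_{k+1},...,eₙ a basis of L. -/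
/-- A finitely generated free quadratic module `N` over a PID `O` (with `1+1 ≠ 0`) is the
orthogonal splitting of its radical `M⊥` and another submodule `L`; and if
`0 < rank M⊥ < rank N` there is a basis `e₁,...,eₙ` of `N` such that `e₁,...,e_k` is a
basis of `M⊥` and `e_{k+1},...,eₙ` is a basis of `L`. -/
theorem radical_orthogonal_splitting
    {O N : Type*} [CommRing O] [IsDomain O] [IsPrincipalIdealRing O] (h2 : (2 : O) ≠ 0)
    [AddCommGroup N] [Module O N] [Module.Free O N] [Module.Finite O N]
    (q : QuadraticForm O N) :
    ∃ L : Submodule O N,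
      IsCompl (LinearMap.ker (QuadraticMap.polarBilin q)) L ∧
      (∀ x ∈ LinearMap.ker (QuadraticMap.polarBilin q), ∀ y ∈ L,
        QuadraticMap.polar (⇑q) x y = 0) ∧
      ((0 < Module.finrank O (LinearMap.ker (QuadraticMap.polarBilin q)) ∧
          Module.finrank O (LinearMap.ker (QuadraticMap.polarBilin q)) <
            Module.finrank O N) →
        ∃ (n k : ℕ) (e : Module.Basis (Fin n) O N), k ≤ n ∧
          Submodule.span O (⇑e '' {i : Fin n | (i : ℕ) < k}) =
            LinearMap.ker (QuadraticMap.polarBilin q) ∧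
          Submodule.span O (⇑e '' {i : Fin n | k ≤ (i : ℕ)}) = L) := by
  classical
  set f := QuadraticMap.polarBilin q with hf
  set K := LinearMap.ker f with hK
  -- the quotient N ⧸ K is free, since it is isomorphic to the range of f,
  -- a submodule of the free module of linear maps
  have hnzd : NoZeroSMulDivisors O (N →ₗ[O] O) := by
    refine ⟨fun {c} {x} h => or_iff_not_imp_left.mpr fun hc => ?_⟩; ext n; have := LinearMap.congr_fun h n; simp only [LinearMap.smul_apply, smul_eq_mul, LinearMap.zero_apply] at this; simpa using (mul_eq_zero.mp this).resolve_left hc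
  have hqnzd : NoZeroSMulDivisors O (N ⧸ K) := by
    refine ⟨fun {c} {x} h => ?_⟩
    obtain ⟨y, rfl⟩ := Submodule.mkQ_surjective K x
    rw [← map_smul, ← LinearMap.mem_ker, Submodule.ker_mkQ] at h
    have h2' : c • f y = 0 := by rw [← map_smul]; exact h
    rcases smul_eq_zero.mp h2' with hc | hy
    · exact Or.inl hc
    · refine Or.inr ?_
      rw [← LinearMap.mem_ker (f := K.mkQ), Submodule.ker_mkQ]
      exact hy
  have hqfin : Module.Finite O (N ⧸ K) := Module.Finite.quotient O K
  have hfree : Module.Free O (N ⧸ K) := Module.free_of_finite_type_torsion_free'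
  have hproj : Module.Projective O (N ⧸ K) := Module.Projective.of_free
  -- split off a complement of K
  obtain ⟨g, hg⟩ := (K.mkQ).exists_rightInverse_of_surjective
    (by rw [Submodule.range_mkQ])
  have hgy : ∀ y, K.mkQ (g y) = y := fun y => by
    have := LinearMap.congr_fun hg y; simpa using this
  refine ⟨LinearMap.range g, ?_, ?_, ?_⟩
  · constructor
    · rw [disjoint_iff]
      ext x
      simp only [Submodule.mem_inf, Submodule.mem_bot]
      constructor
      · rintro ⟨hx1, y, rfl⟩
        have : K.mkQ (g y) = 0 := by
          rwa [← LinearMap.mem_ker, Submodule.ker_mkQ]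
        rw [hgy] at this
        rw [this, map_zero]
      · rintro rfl; exact ⟨zero_mem _, 0, map_zero g⟩
    · rw [codisjoint_iff]
      rw [eq_top_iff]
      intro x _
      have hx : x - g (K.mkQ x) ∈ K := by
        have h0 : K.mkQ (x - g (K.mkQ x)) = 0 := by rw [map_sub, hgy, sub_self]
        simpa using (Submodule.Quotient.mk_eq_zero K).mp (by simpa using h0)
      have : x = (x - g (K.mkQ x)) + g (K.mkQ x) := by abel
      rw [this]
      exact Submodule.add_mem _ (Submodule.mem_sup_left hx)
        (Submodule.mem_sup_right ⟨K.mkQ x, rfl⟩)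
  · intro x hx y _
    have := LinearMap.congr_fun (LinearMap.mem_ker.mp hx) y
    simpa [hf, QuadraticMap.polarBilin] using this
  · intro _
    set L := LinearMap.range g with hL
    have hcompl : IsCompl K L := by
      constructor
      · rw [disjoint_iff]
        ext x
        simp only [Submodule.mem_inf, Submodule.mem_bot]
        constructor
        · rintro ⟨hx1, y, rfl⟩
          have : K.mkQ (g y) = 0 := by
            rwa [← LinearMap.mem_ker, Submodule.ker_mkQ]
          rw [hgy] at this
          rw [this, map_zero]
        · rintro rfl; exact ⟨zero_mem _, 0, map_zero g⟩
      · rw [codisjoint_iff, eq_top_iff]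
        intro x _
        have hx : x - g (K.mkQ x) ∈ K := by
          have h0 : K.mkQ (x - g (K.mkQ x)) = 0 := by rw [map_sub, hgy, sub_self]
          simpa using (Submodule.Quotient.mk_eq_zero K).mp (by simpa using h0)
        have : x = (x - g (K.mkQ x)) + g (K.mkQ x) := by abel
        rw [this]
        exact Submodule.add_mem _ (Submodule.mem_sup_left hx)
          (Submodule.mem_sup_right ⟨K.mkQ x, rfl⟩)
    -- K and L are finite free
    have : IsNoetherian O N := isNoetherian_of_isNoetherianRing_of_finite O N
    have hKfin : Module.Finite O K := Module.Finite.iff_fg.mpr (IsNoetherian.noetherian K)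
    have hLfin : Module.Finite O L := Module.Finite.iff_fg.mpr (IsNoetherian.noetherian L)
    set k := Module.finrank O K
    set m := Module.finrank O L
    let bK : Module.Basis (Fin k) O K := Module.finBasis O K
    let bL : Module.Basis (Fin m) O L := Module.finBasis O L
    let e0 : (K × L) ≃ₗ[O] N := Submodule.prodEquivOfIsCompl K L hcompl
    let e : Module.Basis (Fin (k + m)) O N := (((bK.prod bL).map e0).reindex finSumFinEquiv)
    refine ⟨k + m, k, e, Nat.le_add_right _ _, ?_, ?_⟩
    · have hset : {i : Fin (k + m) | (i : ℕ) < k} = Set.range (Fin.castAdd m) := by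
        ext i
        simp only [Set.mem_setOf_eq, Set.mem_range]
        constructor
        · intro h; exact ⟨⟨(i : ℕ), h⟩, by ext; simp⟩
        · rintro ⟨j, rfl⟩; exact j.2
      have happly : ∀ j : Fin k, e (Fin.castAdd m j) = (bK j : N) := by
        intro j
        simp only [e, Module.Basis.reindex_apply, Module.Basis.map_apply]
        rw [finSumFinEquiv_symm_apply_castAdd]
        simp [e0, Submodule.coe_prodEquivOfIsCompl']
      rw [hset, ← Set.range_comp]
      have : Set.range (⇑e ∘ Fin.castAdd m) = K.subtype '' Set.range ⇑bK := by
        rw [← Set.range_comp]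
        ext x
        simp only [Set.mem_range, Function.comp_apply]
        constructor
        · rintro ⟨j, rfl⟩; exact ⟨j, (happly j).symm⟩
        · rintro ⟨j, rfl⟩; exact ⟨j, happly j⟩
      rw [this, Submodule.span_image, bK.span_eq, Submodule.map_subtype_top]
    · have hset : {i : Fin (k + m) | k ≤ (i : ℕ)} = Set.range (Fin.natAdd k) := by
        ext i
        simp only [Set.mem_setOf_eq, Set.mem_range]
        constructor
        · intro h
          refine ⟨⟨(i : ℕ) - k, ?_⟩, ?_⟩
          · omega
          · ext; simp; omega
        · rintro ⟨j, rfl⟩; simp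
      have happly : ∀ j : Fin m, e (Fin.natAdd k j) = (bL j : N) := by
        intro j
        simp only [e, Module.Basis.reindex_apply, Module.Basis.map_apply]
        rw [finSumFinEquiv_symm_apply_natAdd]
        simp [e0, Submodule.coe_prodEquivOfIsCompl']
      rw [hset, ← Set.range_comp]
      have : Set.range (⇑e ∘ Fin.natAdd k) = L.subtype '' Set.range ⇑bL := by
        rw [← Set.range_comp]
        ext x
        simp only [Set.mem_range, Function.comp_apply]
        constructor
        · rintro ⟨j, rfl⟩; exact ⟨j, (happly j).symm⟩
        · rintro ⟨j, rfl⟩; exact ⟨j, happly j⟩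
      rw [this, Submodule.span_image, bL.span_eq, Submodule.map_subtype_top]
end

section
/- For a module M with finite basis over a principal ideal domain O, an element b = β₁e₁ + ... + βₙeₙ of M is a member of some basis of M if and only if the ideal (β₁,...,βₙ) equals O. -/
/-- For a module `M` with finite basis over a PID `O`, the vector `β₁e₁ + ... + βₙeₙ` is a
member of some basis of `M` iff the ideal `(β₁,...,βₙ)` equals `O`. -/
theorem mem_basis_iff_span_coords_eq_top
    {O M : Type*} [CommRing O] [IsDomain O] [IsPrincipalIdealRing O]
    [AddCommGroup M] [Module O M] {n : ℕ} (b : Module.Basis (Fin n) O M) (β : Fin n → O) :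
    (∃ (c : Module.Basis (Fin n) O M) (i : Fin n), c i = ∑ j, β j • b j) ↔
      Ideal.span (Set.range β) = ⊤ := by
  constructor
  · rintro ⟨c, i, hci⟩
    rw [Ideal.eq_top_iff_one]
    have h1 : (1 : O) = c.coord i (c i) := by simp
    rw [hci, map_sum] at h1
    simp only [map_smul, smul_eq_mul] at h1
    rw [h1]
    exact Ideal.sum_mem _ fun j _ =>
      Ideal.mul_mem_right _ _ (Ideal.subset_span (Set.mem_range_self j))
  · intro hspan
    set v := ∑ j, β j • b j with hv
    have h1 : (1 : O) ∈ Ideal.span (Set.range β) := by rw [hspan]; trivial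
    obtain ⟨γ, hγ⟩ := (Submodule.mem_span_range_iff_exists_fun O).mp h1
    set f : M →ₗ[O] O := b.constr ℕ γ with hf
    have hfb : ∀ j, f (b j) = γ j := fun j => b.constr_basis ℕ γ j
    have hfv : f v = 1 := by
      rw [hv, map_sum]
      simp only [map_smul, hfb, smul_eq_mul]
      rw [← hγ]
      exact Finset.sum_congr rfl fun j _ => by rw [smul_eq_mul, mul_comm]
    obtain ⟨m, bN⟩ := Submodule.basisOfPid b (LinearMap.ker f)
    have hli : ∀ (c : O), ∀ x ∈ LinearMap.ker f, c • v + x = 0 → c = 0 := by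
      intro c x hx hcx
      have := congrArg f hcx
      simpa [hfv, LinearMap.mem_ker.mp hx] using this
    have hsp : ∀ z : M, ∃ c : O, z + c • v ∈ LinearMap.ker f := by
      intro z
      exact ⟨-f z, by simp [hfv]⟩
    let b' : Module.Basis (Fin (m + 1)) O M := Module.Basis.mkFinCons v bN hli hsp
    let e : Fin (m + 1) ≃ Fin n := b'.indexEquiv b
    refine ⟨b'.reindex e, e 0, ?_⟩
    rw [Module.Basis.reindex_apply, Equiv.symm_apply_apply]
    show b' 0 = v
    rw [show (b' : Fin (m+1) → M) = Fin.cons v ((↑) ∘ bN) from Module.Basis.coe_mkFinCons ..]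
    rfl
end

section
/- Over any field K with 1+1 ≠ 0, any two nonzero symmetric 2×2 matrices with the same determinant are geometrically equivalent: if P, Q ∈ Sym₂(K) are nonzero with det P = det Q, then there exists A ∈ GL₂(K) with P = AᵗQA / det(A). -/
open Matrix


lemma tr2 {K : Type*} (a b c d : K) : (!![a, b; c, d])ᵀ = !![a, c; b, d] := by
  ext i j
  fin_cases i <;> fin_cases j <;> rfl

/-- Key lemma: any nonzero symmetric 2×2 matrix over a field of characteristic ≠ 2 is
twisted-congruent to the canonical form `!![1, 0; 0, det P]`. -/
lemma key_canonical {K : Type*} [Field K] (h2 : (2 : K) ≠ 0)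
    (P : Matrix (Fin 2) (Fin 2) K) (hP : P.IsSymm) (hP0 : P ≠ 0) :
    ∃ A : Matrix (Fin 2) (Fin 2) K, IsUnit A.det ∧
      P = (A.det)⁻¹ • (Aᵀ * !![(1 : K), 0; 0, P.det] * A) := by
  have hb : P 1 0 = P 0 1 := by
    have := hP.apply 0 1
    simpa using this
  have hd : P.det = P 0 0 * P 1 1 - P 0 1 * P 0 1 := by
    rw [Matrix.det_fin_two, hb]
  by_cases ha : P 0 0 ≠ 0
  · refine ⟨!![P 0 0, P 0 1; 0, 1], ?_, ?_⟩
    · have : (!![P 0 0, P 0 1; 0, 1] : Matrix (Fin 2) (Fin 2) K).det = P 0 0 := by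
        simp [Matrix.det_fin_two]
      rw [this, isUnit_iff_ne_zero]; exact ha
    · rw [tr2]
      ext i j
      fin_cases i <;> fin_cases j <;>
        simp [Matrix.mul_apply, Fin.sum_univ_two, Matrix.det_fin_two, hd, hb] <;>
        field_simp
  · push_neg at ha
    by_cases hc : P 1 1 ≠ 0
    · refine ⟨!![-(P 0 1), -(P 1 1); 1, 0], ?_, ?_⟩
      · have : (!![-(P 0 1), -(P 1 1); 1, 0] : Matrix (Fin 2) (Fin 2) K).det = P 1 1 := by
          simp [Matrix.det_fin_two]
        rw [this, isUnit_iff_ne_zero]; exact hc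
      · rw [tr2]
        ext i j
        fin_cases i <;> fin_cases j <;>
          simp [Matrix.mul_apply, Fin.sum_univ_two, Matrix.det_fin_two, hd, hb, ha] <;>
          field_simp
    · push_neg at hc
      have hb0 : P 0 1 ≠ 0 := by
        intro h
        apply hP0
        ext i j
        fin_cases i <;> fin_cases j <;> simp_all
      have h2' : (-2 : K) ≠ 0 := neg_ne_zero.mpr h2
      refine ⟨!![-(P 0 1), P 0 1; 1, 1], ?_, ?_⟩
      · have : (!![-(P 0 1), P 0 1; 1, 1] : Matrix (Fin 2) (Fin 2) K).det
            = -(2 * P 0 1) := by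
          simp [Matrix.det_fin_two]; ring
        rw [this, isUnit_iff_ne_zero, neg_ne_zero]
        exact mul_ne_zero h2 hb0
      · rw [tr2]
        ext i j
        fin_cases i <;> fin_cases j <;>
          simp [Matrix.mul_apply, Fin.sum_univ_two, Matrix.det_fin_two,
            hd, hb, ha, hc]
        all_goals {
          have hne : (-P 0 1 - P 0 1 : K) ≠ 0 := by
            have h' : -P 0 1 - P 0 1 = -(2 * P 0 1) := by ring
            rw [h', neg_ne_zero]
            exact mul_ne_zero h2 hb0
          field_simp [hne]
          ring_nf
          simp [h2] }

/-- Over any field `K` with `1+1 ≠ 0`, all nonzero symmetric `2×2` matrices of the same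
determinant are geometrically equivalent: `P = AᵗQA / det A` for some `A ∈ GL₂(K)`. -/
theorem geometrically_equivalent_of_det_eq
    {K : Type*} [Field K] (h2 : (2 : K) ≠ 0)
    (P Q : Matrix (Fin 2) (Fin 2) K) (hP : P.IsSymm) (hQ : Q.IsSymm)
    (hP0 : P ≠ 0) (hQ0 : Q ≠ 0) (hdet : P.det = Q.det) :
    ∃ A : Matrix (Fin 2) (Fin 2) K, IsUnit A.det ∧
      P = (A.det)⁻¹ • (Aᵀ * Q * A) := by
  obtain ⟨A₁, hA₁, hP₁⟩ := key_canonical h2 P hP hP0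
  obtain ⟨A₂, hA₂, hQ₂⟩ := key_canonical h2 Q hQ hQ0
  rw [← hdet] at hQ₂
  set C : Matrix (Fin 2) (Fin 2) K := !![(1 : K), 0; 0, P.det] with hC
  have hdetinv : (A₂⁻¹).det = (A₂.det)⁻¹ := by
    rw [Matrix.det_nonsing_inv, Ring.inverse_eq_inv']
  refine ⟨A₂⁻¹ * A₁, ?_, ?_⟩
  · rw [Matrix.det_mul, hdetinv]
    exact (hA₂.inv).mul hA₁
  · have hinv : A₂ * A₂⁻¹ = 1 := Matrix.mul_nonsing_inv A₂ hA₂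
    have hinvT : (A₂⁻¹)ᵀ * A₂ᵀ = 1 := by
      rw [← Matrix.transpose_mul, hinv, Matrix.transpose_one]
    have hd1 : A₁.det ≠ 0 := hA₁.ne_zero
    have hd2 : A₂.det ≠ 0 := hA₂.ne_zero
    have hmid : (A₂⁻¹ * A₁)ᵀ * Q * (A₂⁻¹ * A₁)
        = (A₂.det)⁻¹ • (A₁ᵀ * C * A₁) := by
      rw [hQ₂, Matrix.transpose_mul]
      simp only [Matrix.mul_smul, Matrix.smul_mul]
      congr 1
      calc A₁ᵀ * (A₂⁻¹)ᵀ * (A₂ᵀ * C * A₂) * (A₂⁻¹ * A₁)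
          = A₁ᵀ * ((A₂⁻¹)ᵀ * A₂ᵀ) * (C * ((A₂ * A₂⁻¹) * A₁)) := by
            simp only [Matrix.mul_assoc]
        _ = A₁ᵀ * C * A₁ := by
            rw [hinvT, hinv, Matrix.mul_one, Matrix.one_mul, ← Matrix.mul_assoc]
    rw [hmid, Matrix.det_mul, hdetinv, smul_smul, hP₁]
    congr 1
    field_simp
end
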